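/- Let a = (a_1,...,a_n) with 0 < a_1 ≤ ... ≤ a_n and define, for 1 ≤ k ≤ n, the lower quantity ξ̲_k(a) = a_1 σ_{k-1;1}(a)/σ_k(a) and upper quantity ξ̄_k(a) = a_n σ_{k-1;n}(a)/σ_k(a). Then 0 < ξ̲_k(a) ≤ k/n ≤ ξ̄_k(a) ≤ 1 for all 1 ≤ k ≤ n. -/

import Mathlib

open Finset

/-- The `k`-th elementary symmetric polynomial of `a : Fin n → ℝ`. -/
noncomputable def esymm (n k : ℕ) (a : Fin n → ℝ) : ℝ :=
  ∑ s ∈ Finset.powersetCard k (Finset.univ : Finset (Fin n)), ∏ i ∈ s, a i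

/-- The `k`-th elementary symmetric polynomial of `a` with the `i`-th entry removed. -/
noncomputable def esymmDel (n k : ℕ) (a : Fin n → ℝ) (i : Fin n) : ℝ :=
  ∑ s ∈ Finset.powersetCard k ((Finset.univ : Finset (Fin n)).erase i), ∏ j ∈ s, a j

noncomputable def sp {n : ℕ} (a : Fin n → ℝ) (m : ℕ) (t : Finset (Fin n)) : ℝ :=
  ∑ s ∈ t.powersetCard m, ∏ j ∈ s, a j

lemma sp_nonneg {n : ℕ} (a : Fin n → ℝ) (ha : ∀ i, 0 < a i) (m : ℕ) (t : Finset (Fin n)) :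
    0 ≤ sp a m t :=
  Finset.sum_nonneg fun s _ => Finset.prod_nonneg fun i _ => (ha i).le

lemma sp_pos {n : ℕ} (a : Fin n → ℝ) (ha : ∀ i, 0 < a i) {m : ℕ} {t : Finset (Fin n)}
    (h : m ≤ t.card) : 0 < sp a m t :=
  Finset.sum_pos (fun s _ => Finset.prod_pos fun i _ => ha i)
    (Finset.powersetCard_nonempty.2 h)

lemma sp_insert {n : ℕ} (a : Fin n → ℝ) (m : ℕ) {i : Fin n} {t : Finset (Fin n)}
    (hi : i ∉ t) : sp a (m + 1) (insert i t) = sp a (m + 1) t + a i * sp a m t := by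
  unfold sp
  rw [Finset.powersetCard_succ_insert hi, Finset.sum_union, Finset.sum_image, Finset.mul_sum]
  · congr 1
    refine Finset.sum_congr rfl fun s hs => ?_
    rw [Finset.mem_powersetCard] at hs
    rw [Finset.prod_insert fun hmem => hi (hs.1 hmem)]
  · intro s hs u hu h
    rw [Finset.mem_coe, Finset.mem_powersetCard] at hs hu
    have hsi : i ∉ s := fun hmem => hi (hs.1 hmem)
    have hui : i ∉ u := fun hmem => hi (hu.1 hmem)
    rw [← Finset.erase_insert hsi, ← Finset.erase_insert hui, h]
  · rw [Finset.disjoint_right]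
    intro s hs hs'
    simp only [Finset.mem_image] at hs
    obtain ⟨u, hu, rfl⟩ := hs
    rw [Finset.mem_powersetCard] at hs' hu
    exact (fun hmem => hi (hs'.1 hmem)) (Finset.mem_insert_self i u)

lemma esymm_split {n : ℕ} (a : Fin n → ℝ) (m : ℕ) (i : Fin n) :
    esymm n (m + 1) a = esymmDel n (m + 1) a i + a i * esymmDel n m a i := by
  have h : (Finset.univ : Finset (Fin n)) = insert i (Finset.univ.erase i) :=
    (Finset.insert_erase (Finset.mem_univ i)).symm
  have := sp_insert a m (t := Finset.univ.erase i) (i := i) (Finset.notMem_erase i _)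
  rw [← h] at this
  exact this

lemma sum_mul_esymmDel {n : ℕ} (a : Fin n → ℝ) (m : ℕ) (hm : m + 1 ≤ n) :
    ∑ i, a i * esymmDel n m a i = (m + 1 : ℝ) * esymm n (m + 1) a := by
  have h1 : ∀ i, a i * esymmDel n m a i = esymm n (m + 1) a - esymmDel n (m + 1) a i := by
    intro i; have := esymm_split a m i; linarith
  have h2 : ∑ i, esymmDel n (m + 1) a i = ((n : ℝ) - (m + 1)) * esymm n (m + 1) a := by
    unfold esymmDel
    rw [Finset.sum_comm' (t' := Finset.powersetCard (m + 1) (Finset.univ : Finset (Fin n)))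
      (s' := fun s => sᶜ) ?_]
    · rw [esymm, Finset.mul_sum]
      refine Finset.sum_congr rfl fun s hs => ?_
      rw [Finset.mem_powersetCard] at hs
      rw [Finset.sum_const, Finset.card_compl, hs.2, Fintype.card_fin, nsmul_eq_mul]
      rw [Nat.cast_sub hm]
      push_cast
      ring
    · intro i s
      simp only [Finset.mem_powersetCard, Finset.mem_compl, Finset.mem_univ, true_and,
        Finset.subset_erase, Finset.subset_univ, true_and]
      try tauto
  calc ∑ i, a i * esymmDel n m a i = ∑ i : Fin n, (esymm n (m + 1) a - esymmDel n (m + 1) a i) :=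
        Finset.sum_congr rfl fun i _ => h1 i
    _ = (n : ℝ) * esymm n (m + 1) a - ((n : ℝ) - (m + 1)) * esymm n (m + 1) a := by
        rw [Finset.sum_sub_distrib, h2, Finset.sum_const, Finset.card_univ, Fintype.card_fin,
          nsmul_eq_mul]
    _ = (m + 1 : ℝ) * esymm n (m + 1) a := by ring

lemma esymmDel_mono {n : ℕ} (a : Fin n → ℝ) (ha : ∀ i, 0 < a i) (m : ℕ) {i j : Fin n}
    (hij : i ≠ j) (hle : a i ≤ a j) :
    a i * esymmDel n m a i ≤ a j * esymmDel n m a j := by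
  cases m with
  | zero =>
      unfold esymmDel
      simp [Finset.powersetCard_zero, hle]
  | succ m =>
      set T := (Finset.univ.erase i).erase j with hT
      have hjT : j ∉ T := Finset.notMem_erase j _
      have hiT : i ∉ T := by
        rw [hT, Finset.erase_right_comm]; exact Finset.notMem_erase i _
      have hEi : (Finset.univ : Finset (Fin n)).erase i = insert j T := by
        rw [hT, Finset.insert_erase (Finset.mem_erase.2 ⟨hij.symm, Finset.mem_univ j⟩)]
      have hEj : (Finset.univ : Finset (Fin n)).erase j = insert i T := by
        rw [hT, Finset.erase_right_comm,
          Finset.insert_erase (Finset.mem_erase.2 ⟨hij, Finset.mem_univ i⟩)]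
      have h1 : esymmDel n (m + 1) a i = sp a (m + 1) T + a j * sp a m T := by
        rw [esymmDel, ← sp, hEi, sp_insert a m hjT]
      have h2 : esymmDel n (m + 1) a j = sp a (m + 1) T + a i * sp a m T := by
        rw [esymmDel, ← sp, hEj, sp_insert a m hiT]
      have hX : 0 ≤ sp a (m + 1) T := sp_nonneg a ha _ _
      have hY : 0 ≤ sp a m T := sp_nonneg a ha _ _
      have hai : 0 < a i := ha i
      rw [h1, h2]
      nlinarith

/-- 0 < ξ̲_k(a) ≤ k/n ≤ ξ̄_k(a) ≤ 1 for 1 ≤ k ≤ n, where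
ξ̲_k(a) = a_1 σ_{k-1;1}(a)/σ_k(a) and ξ̄_k(a) = a_n σ_{k-1;n}(a)/σ_k(a). -/
theorem xi_bounds (n : ℕ) (hn : 0 < n) (a : Fin n → ℝ)
    (ha : ∀ i, 0 < a i) (hmono : Monotone a) (k : ℕ) (hk1 : 1 ≤ k) (hk2 : k ≤ n) :
    0 < a ⟨0, hn⟩ * esymmDel n (k - 1) a ⟨0, hn⟩ / esymm n k a ∧
    a ⟨0, hn⟩ * esymmDel n (k - 1) a ⟨0, hn⟩ / esymm n k a ≤ (k : ℝ) / n ∧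
    (k : ℝ) / n ≤ a ⟨n - 1, by omega⟩ * esymmDel n (k - 1) a ⟨n - 1, by omega⟩ / esymm n k a ∧
    a ⟨n - 1, by omega⟩ * esymmDel n (k - 1) a ⟨n - 1, by omega⟩ / esymm n k a ≤ 1 := by
  obtain ⟨m, rfl⟩ : ∃ m, k = m + 1 := ⟨k - 1, by omega⟩
  have hm : m + 1 ≤ n := hk2
  simp only [Nat.add_sub_cancel]
  set i0 : Fin n := ⟨0, hn⟩ with hi0
  set iN : Fin n := ⟨n - 1, by omega⟩ with hiN
  have hσ : 0 < esymm n (m + 1) a := by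
    have : 0 < sp a (m + 1) (Finset.univ : Finset (Fin n)) :=
      sp_pos a ha (by simp [Finset.card_univ, hm])
    exact this
  have hnpos : (0 : ℝ) < n := by exact_mod_cast hn
  have hcard : ((Finset.univ : Finset (Fin n)).erase i0).card = n - 1 := by
    rw [Finset.card_erase_of_mem (Finset.mem_univ _), Finset.card_univ, Fintype.card_fin]
  have hE0 : 0 < esymmDel n m a i0 := by
    have : 0 < sp a m (Finset.univ.erase i0) := sp_pos a ha (by rw [hcard]; omega)
    exact this
  have hmin : ∀ i, a i0 * esymmDel n m a i0 ≤ a i * esymmDel n m a i := by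
    intro i
    rcases eq_or_ne i0 i with rfl | hne
    · exact le_refl _
    · exact esymmDel_mono a ha m hne (hmono (by exact Fin.mk_le_of_le_val (Nat.zero_le _)))
  have hmax : ∀ i, a i * esymmDel n m a i ≤ a iN * esymmDel n m a iN := by
    intro i
    rcases eq_or_ne i iN with rfl | hne
    · exact le_refl _
    · refine esymmDel_mono a ha m hne (hmono ?_)
      have := i.isLt
      exact Fin.le_def.2 (by show i.val ≤ n - 1; omega)
  have hsum := sum_mul_esymmDel a m hm
  have hlow : (n : ℝ) * (a i0 * esymmDel n m a i0) ≤ (m + 1 : ℝ) * esymm n (m + 1) a := by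
    rw [← hsum]
    calc (n : ℝ) * (a i0 * esymmDel n m a i0)
        = ∑ _i : Fin n, a i0 * esymmDel n m a i0 := by
          rw [Finset.sum_const, Finset.card_univ, Fintype.card_fin, nsmul_eq_mul]
      _ ≤ ∑ i, a i * esymmDel n m a i := Finset.sum_le_sum fun i _ => hmin i
  have hhigh : (m + 1 : ℝ) * esymm n (m + 1) a ≤ (n : ℝ) * (a iN * esymmDel n m a iN) := by
    rw [← hsum]
    calc ∑ i, a i * esymmDel n m a i ≤ ∑ _i : Fin n, a iN * esymmDel n m a iN :=
          Finset.sum_le_sum fun i _ => hmax i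
      _ = (n : ℝ) * (a iN * esymmDel n m a iN) := by
          rw [Finset.sum_const, Finset.card_univ, Fintype.card_fin, nsmul_eq_mul]
  refine ⟨div_pos (mul_pos (ha i0) hE0) hσ, ?_, ?_, ?_⟩
  · rw [div_le_div_iff₀ hσ hnpos]
    push_cast
    nlinarith
  · rw [div_le_div_iff₀ hnpos hσ]
    push_cast
    nlinarith
  · rw [div_le_one hσ]
    have hsplit := esymm_split a m iN
    have : 0 ≤ esymmDel n (m + 1) a iN := sp_nonneg a ha _ _
    linarith
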